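/- Let P, Q be Borel probability measures on ℝ^d with finite first moments such that E_Q[g] ≤ E_P[g] + δ·L for every L-Lipschitz g (all L > 0). Then for any x ∈ ℝ^d and α ∈ (0,1), CVaR_α under Q of the loss −⟨ξ,x⟩ satisfies CVaR_α^Q(−⟨ξ,x⟩) ≤ CVaR_α^P(−⟨ξ,x⟩) + (δ/α)·‖x‖₂, where CVaR_α^μ(L) = inf_t { t + (1/α)·E_μ[(L − t)₊] }. -/

import Mathlib

open MeasureTheory RealInnerProductSpace

/-- Wasserstein Lipschitz bound for CVaR:
if `E_Q[g] ≤ E_P[g] + δ L` for every `L`-Lipschitz `g`, then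
`CVaR_α^Q(−⟨ξ,x⟩) ≤ CVaR_α^P(−⟨ξ,x⟩) + (δ/α)‖x‖`. -/
theorem wasserstein_cvar_bound
    {d : ℕ} (P Q : Measure (EuclideanSpace ℝ (Fin d)))
    [IsProbabilityMeasure P] [IsProbabilityMeasure Q]
    (hP : Integrable (fun ξ => ‖ξ‖) P) (hQ : Integrable (fun ξ => ‖ξ‖) Q)
    (δ : ℝ) (hδ : 0 ≤ δ)
    (hKR : ∀ (L : ℝ), 0 < L → ∀ g : EuclideanSpace ℝ (Fin d) → ℝ,
      LipschitzWith (Real.toNNReal L) g →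
      (∫ ξ, g ξ ∂Q) ≤ (∫ ξ, g ξ ∂P) + δ * L)
    (x : EuclideanSpace ℝ (Fin d)) (α : ℝ) (hα0 : 0 < α) (hα1 : α < 1) :
    (⨅ t : ℝ, (t + (1 / α) * ∫ ξ, max (-⟪ξ, x⟫ - t) 0 ∂Q))
      ≤ (⨅ t : ℝ, (t + (1 / α) * ∫ ξ, max (-⟪ξ, x⟫ - t) 0 ∂P)) + (δ / α) * ‖x‖ := by
  have hidQ : Integrable (fun ξ : EuclideanSpace ℝ (Fin d) => ξ) Q :=
    (integrable_norm_iff aestronglyMeasurable_id).mp hQ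
  have hinnQ : Integrable (fun ξ => -⟪ξ, x⟫ : EuclideanSpace ℝ (Fin d) → ℝ) Q := by
    exact ((innerSL ℝ x).integrable_comp hidQ).neg.congr
      (Filter.Eventually.of_forall fun ξ => by simp [real_inner_comm, mul_comm])
  have hmaxQ : ∀ t : ℝ, Integrable
      (fun ξ => max (-⟪ξ, x⟫ - t) 0 : EuclideanSpace ℝ (Fin d) → ℝ) Q := fun t =>
    by
    have := (hinnQ.sub (integrable_const t)).sup (integrable_const 0)
    exact this.congr (Filter.Eventually.of_forall fun ξ => rfl)
  have hαinv : (1 : ℝ) ≤ 1 / α := by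
    rw [le_div_iff₀ hα0]; linarith
  -- lower bound for the Q infimum
  have hbdd : BddBelow (Set.range
      (fun t : ℝ => t + (1 / α) * ∫ ξ, max (-⟪ξ, x⟫ - t) 0 ∂Q)) := by
    refine ⟨∫ ξ, -⟪ξ, x⟫ ∂Q, ?_⟩
    rintro _ ⟨t, rfl⟩
    have hI0 : 0 ≤ ∫ ξ, max (-⟪ξ, x⟫ - t) 0 ∂Q :=
      integral_nonneg (fun ξ => le_max_right _ _)
    have h1 : (∫ ξ, max (-⟪ξ, x⟫ - t) 0 ∂Q) ≤ (1 / α) * ∫ ξ, max (-⟪ξ, x⟫ - t) 0 ∂Q :=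
      le_mul_of_one_le_left hI0 hαinv
    have h2 : (∫ ξ, (-⟪ξ, x⟫ - t) ∂Q) ≤ ∫ ξ, max (-⟪ξ, x⟫ - t) 0 ∂Q :=
      integral_mono (hinnQ.sub (integrable_const t)) (hmaxQ t)
        (fun ξ => le_max_left _ _)
    have h3 : (∫ ξ, (-⟪ξ, x⟫ - t) ∂Q) = (∫ ξ, -⟪ξ, x⟫ ∂Q) - t := by
      rw [integral_sub hinnQ (integrable_const t), integral_const]
      simp
    dsimp only
    linarith
  rcases eq_or_ne x 0 with rfl | hx
  · simp only [inner_zero_right, norm_zero, mul_zero, neg_zero, integral_const,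
      measure_univ, probReal_univ, ENNReal.toReal_one, one_smul, add_zero]
    exact le_rfl
  have hxpos : (0 : ℝ) < ‖x‖ := norm_pos_iff.mpr hx
  -- reduce to pointwise inequality
  rw [← sub_le_iff_le_add]
  refine le_ciInf fun t => ?_
  rw [sub_le_iff_le_add]
  refine le_trans (ciInf_le hbdd t) ?_
  -- Lipschitz function
  have hlip : LipschitzWith (Real.toNNReal ‖x‖)
      (fun ξ : EuclideanSpace ℝ (Fin d) => max (-⟪ξ, x⟫ - t) 0) := by
    have hlin : LipschitzWith (Real.toNNReal ‖x‖)
        (fun ξ : EuclideanSpace ℝ (Fin d) => -⟪ξ, x⟫ - t) := by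
      apply LipschitzWith.of_dist_le_mul
      intro a b
      have he : (-⟪a, x⟫ - t) - (-⟪b, x⟫ - t) = ⟪b - a, x⟫ := by
        rw [inner_sub_left]; ring
      rw [Real.dist_eq, he, Real.coe_toNNReal _ (norm_nonneg x)]
      calc |⟪b - a, x⟫| ≤ ‖b - a‖ * ‖x‖ := abs_real_inner_le_norm _ _
        _ = ‖x‖ * dist a b := by rw [dist_eq_norm, ← norm_neg (b - a)]; simp [mul_comm]
    exact hlin.max_const 0
  have hkey := hKR ‖x‖ hxpos _ hlip
  have h1α : (0 : ℝ) ≤ 1 / α := by positivity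
  have : (1 / α) * (∫ ξ, max (-⟪ξ, x⟫ - t) 0 ∂Q)
      ≤ (1 / α) * ((∫ ξ, max (-⟪ξ, x⟫ - t) 0 ∂P) + δ * ‖x‖) :=
    mul_le_mul_of_nonneg_left hkey h1α
  have heq : (δ / α) * ‖x‖ = (1 / α) * (δ * ‖x‖) := by ring
  rw [heq]
  linarith [this]
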